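/- Let E be a bounded semi-infinite real matrix, and for each k ≥ 1 let E^{(k)} be the semi-infinite matrix that coincides with E in its leading k×k submatrix (entries with i ≤ k and j ≤ k) and is zero elsewhere. Then E has the decay property if and only if lim_{k→∞} ‖E − E^{(k)}‖_∞ = 0. -/

import Mathlib

open Filter Topology

/-- Every row of `A` is absolutely summable. -/
def RowsSummable (A : ℕ → ℕ → ℝ) : Prop := ∀ i, Summable fun j => |A i j|

/-- The infinity norm of a semi-infinite matrix: the supremum of the row sums. -/
noncomputable def normInf (A : ℕ → ℕ → ℝ) : ℝ := ⨆ i, ∑' j, |A i j|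

/-- `A` is bounded: all row sums are finite and their supremum is finite. -/
def MatBounded (A : ℕ → ℕ → ℝ) : Prop :=
  RowsSummable A ∧ BddAbove (Set.range fun i => ∑' j, |A i j|)

/-- `A` has the decay property: all row sums are finite and tend to zero. -/
def HasDecay (A : ℕ → ℕ → ℝ) : Prop :=
  RowsSummable A ∧ Tendsto (fun i => ∑' j, |A i j|) atTop (𝓝 0)

/- STATEMENT 1: a bounded matrix E has the decay property iff
   ‖E − E^{(k)}‖_∞ → 0, where E^{(k)} coincides with E on the leading k×k
   submatrix and is zero elsewhere. -/

theorem stmt1 (E : ℕ → ℕ → ℝ) (hE : MatBounded E) :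
    HasDecay E ↔
      Tendsto
        (fun k => normInf (fun i j => E i j - (if i < k ∧ j < k then E i j else 0)))
        atTop (𝓝 0) := by
  obtain ⟨hsum, hbdd⟩ := hE
  obtain ⟨B, hB⟩ := hbdd
  set w : ℕ → ℝ := fun i => ∑' j, |E i j| with hw_def
  have hw : ∀ i, w i ≤ B := fun i => hB (Set.mem_range_self i)
  have hw0 : ∀ i, 0 ≤ w i := fun i => tsum_nonneg fun j => abs_nonneg _
  set f : ℕ → ℕ → ℕ → ℝ := fun k i j => if i < k ∧ j < k then 0 else |E i j| with hf_def
  have hf_eq : ∀ k i j, |E i j - (if i < k ∧ j < k then E i j else 0)| = f k i j := by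
    intro k i j
    simp only [hf_def]
    split <;> simp
  have hf_nonneg : ∀ k i j, 0 ≤ f k i j := by
    intro k i j; simp only [hf_def]; split
    · exact le_refl 0
    · exact abs_nonneg _
  have hf_le : ∀ k i j, f k i j ≤ |E i j| := by
    intro k i j; simp only [hf_def]; split
    · exact abs_nonneg _
    · exact le_refl _
  have hsumf : ∀ k i, Summable (f k i) := fun k i =>
    Summable.of_nonneg_of_le (hf_nonneg k i) (hf_le k i) (hsum i)
  have hle : ∀ k i, ∑' j, f k i j ≤ w i := fun k i =>
    Summable.tsum_le_tsum (hf_le k i) (hsumf k i) (hsum i)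
  have hnn : ∀ k i, 0 ≤ ∑' j, f k i j := fun k i => tsum_nonneg (hf_nonneg k i)
  -- partial sums
  set p : ℕ → ℕ → ℝ := fun i k => ∑ j ∈ Finset.range k, |E i j| with hp_def
  have hp0 : ∀ i k, 0 ≤ p i k := fun i k => Finset.sum_nonneg fun j _ => abs_nonneg _
  have h_ge : ∀ k i, k ≤ i → ∑' j, f k i j = w i := by
    intro k i hki
    refine tsum_congr fun j => ?_
    simp only [hf_def]
    rw [if_neg]
    rintro ⟨h1, -⟩
    exact absurd hki (not_le.mpr h1)
  have h_lt : ∀ k i, i < k → ∑' j, f k i j = w i - p i k := by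
    intro k i hik
    have hhead : Summable (fun j => if j < k then |E i j| else 0) := by
      apply summable_of_ne_finset_zero (s := Finset.range k)
      intro j hj
      rw [if_neg (by simpa using hj)]
    have h1 : ∀ j, f k i j = |E i j| - (if j < k then |E i j| else 0) := by
      intro j
      simp only [hf_def]
      by_cases hj : j < k
      · rw [if_pos ⟨hik, hj⟩, if_pos hj]; ring
      · rw [if_neg (fun h => hj h.2), if_neg hj]; ring
    calc ∑' j, f k i j = ∑' j, (|E i j| - (if j < k then |E i j| else 0)) :=
          tsum_congr h1
      _ = w i - ∑' j, (if j < k then |E i j| else 0) := Summable.tsum_sub (hsum i) hhead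
      _ = w i - p i k := by
          congr 1
          rw [tsum_eq_sum (s := Finset.range k) (by intro j hj; rw [if_neg (by simpa using hj)])]
          exact Finset.sum_congr rfl fun j hj => if_pos (Finset.mem_range.mp hj)
  have htail : ∀ i, Tendsto (fun k => w i - p i k) atTop (𝓝 0) := by
    intro i
    have := (hsum i).hasSum.tendsto_sum_nat
    have h2 := (tendsto_const_nhds (x := w i)).sub this
    rwa [show w i - ∑' j, |E i j| = 0 from sub_self _] at h2
  have hbdd' : ∀ k, BddAbove (Set.range fun i => ∑' j, f k i j) := by
    intro k
    exact ⟨B, by rintro x ⟨i, rfl⟩; exact (hle k i).trans (hw i)⟩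
  have hN : ∀ k, normInf (fun i j => E i j - (if i < k ∧ j < k then E i j else 0))
      = ⨆ i, ∑' j, f k i j := by
    intro k
    unfold normInf
    exact iSup_congr fun i => tsum_congr fun j => hf_eq k i j
  constructor
  · rintro ⟨-, hdec⟩
    rw [Metric.tendsto_atTop] at hdec ⊢
    intro ε hε
    obtain ⟨N₁, hN₁⟩ := hdec (ε / 2) (by linarith)
    have hN₁' : ∀ i ≥ N₁, w i < ε / 2 := by
      intro i hi
      have := hN₁ i hi
      rwa [Real.dist_eq, sub_zero, abs_of_nonneg (hw0 i)] at this
    have hK : ∀ i, ∃ K, ∀ k ≥ K, w i - p i k < ε / 2 := by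
      intro i
      have := (Metric.tendsto_atTop.mp (htail i)) (ε / 2) (by linarith)
      obtain ⟨K, hK⟩ := this
      exact ⟨K, fun k hk => lt_of_le_of_lt (le_abs_self _)
        (by simpa [Real.dist_eq] using hK k hk)⟩
    choose K hKspec using hK
    refine ⟨max N₁ ((Finset.range N₁).sup K), fun k hk => ?_⟩
    rw [hN k, Real.dist_eq, sub_zero, abs_of_nonneg]
    · have hkN₁ : N₁ ≤ k := le_trans (le_max_left _ _) hk
      have : (⨆ i, ∑' j, f k i j) ≤ ε / 2 := by
        refine ciSup_le fun i => ?_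
        by_cases hik : i < k
        · rw [h_lt k i hik]
          by_cases hiN : i < N₁
          · exact le_of_lt (hKspec i k
              (le_trans (le_trans (Finset.le_sup (Finset.mem_range.mpr hiN)) (le_max_right _ _)) hk))
          · have : w i - p i k ≤ w i := sub_le_self _ (hp0 i k)
            exact le_of_lt (lt_of_le_of_lt this (hN₁' i (not_lt.mp hiN)))
        · rw [h_ge k i (not_lt.mp hik)]
          exact le_of_lt (hN₁' i (le_trans hkN₁ (not_lt.mp hik)))
      linarith
    · exact le_trans (hnn k 0) (le_ciSup (hbdd' k) 0)
  · intro htend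
    refine ⟨hsum, ?_⟩
    have hwle : ∀ i, w i ≤ normInf (fun i' j => E i' j - (if i' < i ∧ j < i then E i' j else 0)) := by
      intro i
      rw [hN i, ← h_ge i i le_rfl]
      exact le_ciSup (hbdd' i) i
    exact squeeze_zero hw0 hwle htend
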